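/- Let K ⊆ ℝ^m be a closed convex cone with dual K*. Define x ⊓ y = P_{x-K}(y) and x ⊓_* y = P_{x-K*}(y), and similarly x ⊔ y = P_{x+K}(y), x ⊔_* y = P_{x+K*}(y). Then for all x, y ∈ ℝ^m: x ⊓_* y = y ⊓ x and x ⊔_* y = y ⊔ x. -/

import Mathlib

open RealInnerProductSpace

noncomputable section

abbrev E (m : ℕ) := EuclideanSpace ℝ (Fin m)

/-- `P` is the metric projection map: for every nonempty closed convex set `D`,
`P D x` lies in `D` and satisfies the variational characterization. -/
def IsProjMap {m : ℕ} (P : Set (E m) → E m → E m) : Prop :=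
  ∀ D : Set (E m), D.Nonempty → IsClosed D → Convex ℝ D →
    ∀ x, P D x ∈ D ∧ ∀ y ∈ D, ⟪P D x - x, P D x - y⟫ ≤ 0

/-- The dual cone of `K`. -/
def dualCone {m : ℕ} (K : Set (E m)) : Set (E m) :=
  {y | ∀ x ∈ K, 0 ≤ ⟪x, y⟫}

/-- `x ⊓ y = P_{x-K} y`. -/
def meet {m : ℕ} (P : Set (E m) → E m → E m) (K : Set (E m)) (x y : E m) : E m :=
  P ((fun k => x - k) '' K) y

/-- `x ⊔ y = P_{x+K} y`. -/
def join {m : ℕ} (P : Set (E m) → E m → E m) (K : Set (E m)) (x y : E m) : E m :=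
  P ((fun k => x + k) '' K) y

/-- `C` is `K`-invariant: closed under `meet` and `join`. -/
def KInv {m : ℕ} (P : Set (E m) → E m → E m) (K C : Set (E m)) : Prop :=
  ∀ x ∈ C, ∀ y ∈ C, meet P K x y ∈ C ∧ join P K x y ∈ C

/-- Uniqueness of the point satisfying the variational characterization. -/
lemma proj_char_unique {m : ℕ} {D : Set (E m)} {x p q : E m}
    (hpD : p ∈ D) (hp : ∀ z ∈ D, ⟪p - x, p - z⟫ ≤ 0)
    (hqD : q ∈ D) (hq : ∀ z ∈ D, ⟪q - x, q - z⟫ ≤ 0) : p = q := by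
  have h1 := hp q hqD
  have h2 := hq p hpD
  have key : ⟪p - q, p - q⟫ ≤ 0 := by
    have e : p - q = (p - x) - (q - x) := by abel
    calc ⟪p - q, p - q⟫ = ⟪p - x, p - q⟫ - ⟪q - x, p - q⟫ := by rw [e, inner_sub_left]
    _ = ⟪p - x, p - q⟫ + ⟪q - x, q - p⟫ := by
        rw [show q - p = -(p - q) by abel, inner_neg_right]; ring
    _ ≤ 0 := by linarith
  exact sub_eq_zero.mp (real_inner_self_nonpos.mp key)

lemma sub_image_closed {m : ℕ} (c : E m) {S : Set (E m)} (h : IsClosed S) :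
    IsClosed ((fun k => c - k) '' S) :=
  (Homeomorph.subLeft c).isClosedMap _ h

lemma add_image_closed {m : ℕ} (c : E m) {S : Set (E m)} (h : IsClosed S) :
    IsClosed ((fun k => c + k) '' S) :=
  (Homeomorph.addLeft c).isClosedMap _ h

lemma sub_image_convex {m : ℕ} (c : E m) {S : Set (E m)} (h : Convex ℝ S) :
    Convex ℝ ((fun k => c - k) '' S) := by
  rintro _ ⟨a, ha, rfl⟩ _ ⟨b, hb, rfl⟩ s t hs ht hst
  refine ⟨s • a + t • b, h ha hb hs ht hst, ?_⟩
  have : s • (c - a) + t • (c - b) = (s + t) • c - (s • a + t • b) := by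
    rw [smul_sub, smul_sub, add_smul]; abel
  simp only [this, hst, one_smul]

lemma add_image_convex {m : ℕ} (c : E m) {S : Set (E m)} (h : Convex ℝ S) :
    Convex ℝ ((fun k => c + k) '' S) := by
  rintro _ ⟨a, ha, rfl⟩ _ ⟨b, hb, rfl⟩ s t hs ht hst
  refine ⟨s • a + t • b, h ha hb hs ht hst, ?_⟩
  have : s • (c + a) + t • (c + b) = (s + t) • c + (s • a + t • b) := by
    rw [smul_add, smul_add, add_smul]; abel
  simp only [this, hst, one_smul]

lemma dualCone_closed {m : ℕ} (K : Set (E m)) : IsClosed (dualCone K) := by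
  have : dualCone K = ⋂ w ∈ K, {y : E m | 0 ≤ ⟪w, y⟫} := by
    ext z; simp [dualCone]
  rw [this]
  exact isClosed_biInter fun w _ =>
    isClosed_le continuous_const (continuous_const.inner continuous_id)

lemma dualCone_convex {m : ℕ} (K : Set (E m)) : Convex ℝ (dualCone K) := by
  intro a ha b hb s t hs ht _
  intro w hw
  have h1 := ha w hw
  have h2 := hb w hw
  rw [inner_add_right, real_inner_smul_right, real_inner_smul_right]
  positivity

lemma dualCone_zero_mem {m : ℕ} (K : Set (E m)) : (0 : E m) ∈ dualCone K :=
  fun w _ => by simp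

theorem star_ops_swap (m : ℕ)
    (P : Set (E m) → E m → E m) (hP : IsProjMap P)
    (K : Set (E m)) (hKcl : IsClosed K) (hKconv : Convex ℝ K)
    (hKcone : ∀ t : ℝ, 0 ≤ t → ∀ v ∈ K, t • v ∈ K) (hK0 : (0 : E m) ∈ K)
    (x y : E m) :
    meet P (dualCone K) x y = meet P K y x ∧
      join P (dualCone K) x y = join P K y x := by
  -- K is closed under addition
  have hKadd : ∀ a ∈ K, ∀ b ∈ K, a + b ∈ K := by
    intro a ha b hb
    have hmid : (1/2 : ℝ) • a + (1/2 : ℝ) • b ∈ K :=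
      hKconv ha hb (by norm_num) (by norm_num) (by norm_num)
    have := hKcone 2 (by norm_num) _ hmid
    have e : (2 : ℝ) • ((1/2 : ℝ) • a + (1/2 : ℝ) • b) = a + b := by
      rw [smul_add, smul_smul, smul_smul]; norm_num
    rwa [e] at this
  constructor
  · -- meet case
    set S1 := (fun k => y - k) '' K with hS1
    set S2 := (fun k => x - k) '' (dualCone K) with hS2
    obtain ⟨hv1, hv2⟩ := hP S1 ⟨y, 0, hK0, by simp⟩ (sub_image_closed y hKcl)
      (sub_image_convex y hKconv) x
    set v := P S1 x with hv
    obtain ⟨k, hk, hkv⟩ := hv1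
    -- variational inequality rewritten
    have hvar : ∀ k' ∈ K, ⟪v - x, k' - k⟫ ≤ 0 := by
      intro k' hk'
      have := hv2 (y - k') ⟨k', hk', rfl⟩
      have e : v - (y - k') = k' - k := by rw [← hkv]; beta_reduce; abel
      rwa [e] at this
    have hvK : ∀ w ∈ K, ⟪v - x, w⟫ ≤ 0 := by
      intro w hw
      have := hvar (k + w) (hKadd k hk w hw)
      simpa using this
    have hvk : 0 ≤ ⟪v - x, k⟫ := by
      have := hvar 0 hK0
      rw [zero_sub, inner_neg_right] at this
      linarith
    -- v satisfies the characterization of P S2 y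
    have hvS2 : v ∈ S2 := by
      refine ⟨x - v, fun w hw => ?_, by module⟩
      have := hvK w hw
      rw [real_inner_comm, show x - v = -(v - x) by abel, inner_neg_left]
      linarith
    have hvvar : ∀ z ∈ S2, ⟪v - y, v - z⟫ ≤ 0 := by
      rintro _ ⟨s, hs, rfl⟩
      have e1 : v - y = -k := by rw [← hkv]; beta_reduce; abel
      have e2 : v - (x - s) = (v - x) + s := by abel
      rw [e1, e2, inner_neg_left, inner_add_right]
      have h1 : 0 ≤ ⟪k, s⟫ := hs k hk
      have h2 : 0 ≤ ⟪k, v - x⟫ := by rwa [real_inner_comm]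
      linarith
    obtain ⟨hw1, hw2⟩ := hP S2 ⟨x, 0, dualCone_zero_mem K, by simp⟩
      (sub_image_closed x (dualCone_closed K)) (sub_image_convex x (dualCone_convex K)) y
    exact proj_char_unique hw1 hw2 hvS2 hvvar
  · -- join case
    set S1 := (fun k => y + k) '' K with hS1
    set S2 := (fun k => x + k) '' (dualCone K) with hS2
    obtain ⟨hv1, hv2⟩ := hP S1 ⟨y, 0, hK0, by simp⟩ (add_image_closed y hKcl)
      (add_image_convex y hKconv) x
    set v := P S1 x with hv
    obtain ⟨k, hk, hkv⟩ := hv1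
    have hvar : ∀ k' ∈ K, ⟪v - x, k - k'⟫ ≤ 0 := by
      intro k' hk'
      have := hv2 (y + k') ⟨k', hk', rfl⟩
      have e : v - (y + k') = k - k' := by rw [← hkv]; beta_reduce; abel
      rwa [e] at this
    have hvK : ∀ w ∈ K, 0 ≤ ⟪v - x, w⟫ := by
      intro w hw
      have := hvar (k + w) (hKadd k hk w hw)
      have e : k - (k + w) = -w := by abel
      rw [e, inner_neg_right] at this
      linarith
    have hvk : ⟪v - x, k⟫ ≤ 0 := by
      have := hvar 0 hK0
      simpa using this
    have hvS2 : v ∈ S2 := by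
      refine ⟨v - x, fun w hw => ?_, by module⟩
      rw [real_inner_comm]
      exact hvK w hw
    have hvvar : ∀ z ∈ S2, ⟪v - y, v - z⟫ ≤ 0 := by
      rintro _ ⟨s, hs, rfl⟩
      have e1 : v - y = k := by rw [← hkv]; module
      have e2 : v - (x + s) = (v - x) - s := by abel
      rw [e1, e2, inner_sub_right]
      have h1 : 0 ≤ ⟪k, s⟫ := hs k hk
      have h2 : ⟪k, v - x⟫ ≤ 0 := by rwa [real_inner_comm]
      linarith
    obtain ⟨hw1, hw2⟩ := hP S2 ⟨x, 0, dualCone_zero_mem K, by simp⟩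
      (add_image_closed x (dualCone_closed K)) (add_image_convex x (dualCone_convex K)) y
    exact proj_char_unique hw1 hw2 hvS2 hvvar
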